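/- Fix an integer N ≥ 2 and real P > 0, and let φ ∈ [1,N] satisfy (1+NPφ)^{N-1} = (1+Pφ(N-φ))^N. Then (N−φ)·(1+NPφ)/(1+Pφ(N−φ)) > N−1. -/
import Mathlib

lemma key_geom (v : ℝ) (hv : 1 < v) : ∀ N : ℕ, 2 ≤ N → (N : ℝ) * (v - 1) < v ^ N - 1 := by
  intro N hN
  induction N, hN using Nat.le_induction with
  | base => push_cast; nlinarith
  | succ n hn ih =>
    push_cast at ih ⊢
    have hvn : 0 < v ^ n := pow_pos (by linarith) n
    have h : v ^ (n + 1) = v * v ^ n := by ring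
    nlinarith [ih, mul_pos (sub_pos.2 hv) (sub_pos.2 hv)]

theorem stmt_10 (N : ℕ) (hN : 2 ≤ N) (P : ℝ) (hP : 0 < P) (φ : ℝ)
    (hφ : φ ∈ Set.Icc 1 (N : ℝ))
    (heq : (1 + (N : ℝ) * P * φ) ^ (N - 1) = (1 + P * φ * ((N : ℝ) - φ)) ^ N) :
    ((N : ℝ) - φ) * (1 + (N : ℝ) * P * φ) / (1 + P * φ * ((N : ℝ) - φ)) > (N : ℝ) - 1 := by
  obtain ⟨hφ1, hφN⟩ := hφ
  set a : ℝ := 1 + (N : ℝ) * P * φ with ha_def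
  set b : ℝ := 1 + P * φ * ((N : ℝ) - φ) with hb_def
  have hNR : (2:ℝ) ≤ (N:ℝ) := by exact_mod_cast hN
  have hφ0 : 0 < φ := by linarith
  have ha1 : 1 < a := by
    have h : 0 < (N:ℝ) * P * φ := by positivity
    simp only [ha_def]; linarith
  have ha0 : 0 < a := by linarith
  have hN1 : N - 1 ≠ 0 := by omega
  have hN0 : N ≠ 0 := by omega
  have haN1 : 1 < a ^ (N - 1) := one_lt_pow₀ ha1 hN1
  have hbN : 1 < b ^ N := by rw [← heq]; exact haN1
  have hb1 : 1 < b := by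
    by_contra h
    push_neg at h
    rcases le_or_gt 0 b with hb0' | hb0'
    · have : b ^ N ≤ 1 := pow_le_one₀ hb0' h
      linarith
    · have hnb : 0 ≤ -b := by linarith
      nlinarith [hbN]
  have hb0 : 0 < b := by linarith
  have hsφ : 0 < (N:ℝ) - φ := by
    by_contra h
    push_neg at h
    have h1 : 0 < P * φ * ((N:ℝ) - φ) := by simp only [hb_def] at hb1; linarith
    nlinarith [mul_pos hP hφ0]
  -- define the N-th root of a
  set v : ℝ := a ^ ((N:ℝ)⁻¹) with hv_def
  have hv0 : 0 < v := Real.rpow_pos_of_pos ha0 _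
  have hva : v ^ N = a := by
    rw [hv_def, ← Real.rpow_natCast (a ^ ((N:ℝ)⁻¹)) N, ← Real.rpow_mul ha0.le,
      inv_mul_cancel₀ (by exact_mod_cast hN0), Real.rpow_one]
  have hv1 : 1 < v := by
    by_contra h
    push_neg at h
    have : v ^ N ≤ 1 := pow_le_one₀ hv0.le h
    rw [hva] at this; linarith
  -- b = v^(N-1)
  have hvb : v ^ (N - 1) = b := by
    have h1 : (v ^ (N - 1)) ^ N = b ^ N := by
      rw [← pow_mul, ← heq, ← hva, ← pow_mul, Nat.mul_comm]
    have h2 : 0 ≤ v ^ (N - 1) := by positivity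
    exact (pow_left_inj₀ h2 hb0.le hN0).mp h1
  have hw1 : 1 < v ^ (N - 1) := by rw [hvb]; exact hb1
  have hwv : v ^ (N - 1) * v = v ^ N := by
    rw [← pow_succ]
    congr 1
    omega
  have key : (N:ℝ) * (v - 1) < v ^ N - 1 := key_geom v hv1 N hN
  -- the relation (N-φ)*(a-1) = N*(b-1)
  have hrel : ((N:ℝ) - φ) * (v ^ (N - 1) * v - 1) = (N:ℝ) * (v ^ (N - 1) - 1) := by
    rw [hwv, hva, hvb, ha_def, hb_def]
    ring
  have hY : 0 < v ^ (N - 1) * v - 1 := by rw [hwv, hva]; linarith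
  have h1 : 0 < v ^ (N - 1) * v - (N:ℝ) * v + (N:ℝ) - 1 := by
    have := key
    rw [← hwv] at this
    linarith
  have h2 : 0 < v ^ (N - 1) * (v ^ (N - 1) * v - (N:ℝ) * v + (N:ℝ) - 1) := by
    apply mul_pos (by linarith) h1
  have h3 : (((N:ℝ) - φ) * (v ^ (N - 1) * v) - ((N:ℝ) - 1) * v ^ (N - 1)) * (v ^ (N - 1) * v - 1)
      = v ^ (N - 1) * (v ^ (N - 1) * v - (N:ℝ) * v + (N:ℝ) - 1) := by
    have e : (((N:ℝ) - φ) * (v ^ (N - 1) * v) - ((N:ℝ) - 1) * v ^ (N - 1)) * (v ^ (N - 1) * v - 1)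
        = (((N:ℝ) - φ) * (v ^ (N - 1) * v - 1)) * (v ^ (N - 1) * v) - ((N:ℝ) - 1) * v ^ (N - 1) * (v ^ (N - 1) * v - 1) := by ring
    rw [e, hrel]
    ring
  have hX : 0 < ((N:ℝ) - φ) * (v ^ (N - 1) * v) - ((N:ℝ) - 1) * v ^ (N - 1) := by
    by_contra h
    push_neg at h
    nlinarith [mul_nonpos_of_nonpos_of_nonneg h hY.le]
  rw [gt_iff_lt, lt_div_iff₀ hb0]
  have hab : ((N:ℝ) - φ) * a = ((N:ℝ) - φ) * (v ^ (N - 1) * v) := by rw [hwv, hva]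
  have hbw : b = v ^ (N - 1) := (hvb).symm
  rw [hab, hbw]
  linarith
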